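/- Quantile–area identity: For a nonnegative real random variable Z with distribution function F_Z and left-continuous quantile function F_Z^{-1}, and for every α ∈ (0,1), ∫₀^α F_Z^{-1}(u) du = ∫₀^∞ (α − F_Z(t))₊ dt, where (x)₊ = max{x,0}. -/

import Mathlib

open MeasureTheory Set Filter
open scoped Topology ENNReal NNReal

/-- Quantile–area identity: for a nonnegative integrable random variable Z and
α ∈ (0,1), ∫₀^α F_Z^{-1}(u) du = ∫₀^∞ (α − F_Z(t))₊ dt. -/
theorem stmt_9
    {Ω : Type*} [MeasurableSpace Ω] (μ : Measure Ω) [IsProbabilityMeasure μ]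
    (Z : Ω → ℝ) (hZm : Measurable Z) (hZ0 : ∀ᵐ ω ∂μ, 0 ≤ Z ω)
    (hZi : Integrable Z μ)
    (F : ℝ → ℝ) (hF : ∀ t, F t = (μ {ω | Z ω ≤ t}).toReal)
    (Finv : ℝ → ℝ) (hFinv : ∀ u, Finv u = sInf {t : ℝ | u ≤ F t})
    (α : ℝ) (hα : α ∈ Set.Ioo (0 : ℝ) 1) :
    (∫ u in (0 : ℝ)..α, Finv u) = ∫ t in Set.Ioi (0 : ℝ), max (α - F t) 0 := by
  obtain ⟨hα0, hα1⟩ := hα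
  set ν := μ.map Z with hν
  have hprob : IsProbabilityMeasure ν := Measure.isProbabilityMeasure_map hZm.aemeasurable
  have hFcdf : ∀ t, F t = ProbabilityTheory.cdf ν t := by
    intro t
    rw [hF, ProbabilityTheory.cdf_eq_real, measureReal_def]
    congr 1
    rw [hν, Measure.map_apply hZm measurableSet_Iic]
    rfl
  have hFmono : Monotone F := by
    intro a b hab
    rw [hFcdf a, hFcdf b]
    exact ProbabilityTheory.monotone_cdf ν hab
  have hF0 : ∀ t, 0 ≤ F t := fun t => by
    rw [hFcdf t]; exact ProbabilityTheory.cdf_nonneg ν t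
  have hFneg : ∀ t, t < 0 → F t = 0 := by
    intro t ht
    rw [hF]
    have : μ {ω | Z ω ≤ t} = 0 := by
      refine measure_mono_null (fun ω hω => ?_) (ae_iff.mp hZ0)
      simp only [Set.mem_setOf_eq, not_le] at *
      exact lt_of_le_of_lt hω ht
    simp [this]
  have hFtop : Tendsto F atTop (𝓝 1) := by
    have := ProbabilityTheory.tendsto_cdf_atTop ν
    refine this.congr' ?_
    filter_upwards with t using (hFcdf t).symm
  have hFright : ∀ c, ContinuousWithinAt F (Set.Ici c) c := by
    intro c
    have := (ProbabilityTheory.cdf ν).right_continuous c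
    refine this.congr (fun x _ => (hFcdf x)) (hFcdf c)
  -- Properties of the set S u = {t | u ≤ F t}
  have hSne : ∀ u : ℝ, u < 1 → {t : ℝ | u ≤ F t}.Nonempty := by
    intro u hu
    obtain ⟨t, ht⟩ := (hFtop.eventually (eventually_ge_nhds hu)).exists
    exact ⟨t, ht⟩
  have hSbdd : ∀ u : ℝ, 0 < u → BddBelow {t : ℝ | u ≤ F t} := by
    intro u hu
    refine ⟨0, fun t ht => ?_⟩
    by_contra h
    push_neg at h
    rw [Set.mem_setOf_eq, hFneg t h] at ht
    exact absurd (lt_of_lt_of_le hu ht) (lt_irrefl 0)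
  have hFinv_le : ∀ u : ℝ, 0 < u → u < 1 → ∀ t, (Finv u ≤ t ↔ u ≤ F t) := by
    intro u hu0 hu1 t
    constructor
    · intro h
      -- first show u ≤ F (Finv u) by right continuity
      have hmem : u ≤ F (Finv u) := by
        have hgt : ∀ x, Finv u < x → u ≤ F x := by
          intro x hx
          rw [hFinv] at hx
          obtain ⟨s, hs, hsx⟩ := (csInf_lt_iff (hSbdd u hu0) (hSne u hu1)).mp hx
          exact le_trans hs (hFmono hsx.le)
        have hne : (𝓝[Set.Ioi (Finv u)] (Finv u)).NeBot := nhdsGT_neBot _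
        refine ge_of_tendsto ((hFright (Finv u)).mono Set.Ioi_subset_Ici_self) ?_
        filter_upwards [self_mem_nhdsWithin] with x hx using hgt x hx
      exact le_trans hmem (hFmono h)
    · intro h
      rw [hFinv]
      exact csInf_le (hSbdd u hu0) h
  have hFinv_lt : ∀ u : ℝ, 0 < u → u < 1 → ∀ t, (t < Finv u ↔ F t < u) := by
    intro u hu0 hu1 t
    rw [lt_iff_not_ge, lt_iff_not_ge]
    exact not_congr (hFinv_le u hu0 hu1 t)
  have hFinv_nonneg : ∀ u : ℝ, 0 < u → u < 1 → 0 ≤ Finv u := by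
    intro u hu0 hu1
    rw [hFinv]
    refine le_csInf (hSne u hu1) fun t ht => ?_
    by_contra h
    push_neg at h
    rw [Set.mem_setOf_eq, hFneg t h] at ht
    exact absurd (lt_of_lt_of_le hu0 ht) (lt_irrefl 0)
  have hFinv_mono : MonotoneOn Finv (Set.Ioc (0 : ℝ) α) := by
    intro u hu v hv huv
    rw [hFinv, hFinv]
    exact csInf_le_csInf (hSbdd u hu.1) (hSne v (lt_of_le_of_lt hv.2 hα1))
      (fun t ht => le_trans huv ht)
  have hFmeas : Measurable F := hFmono.measurable
  -- the key lintegral identity via Tonelli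
  have hs : MeasurableSet {p : ℝ × ℝ | F p.2 < p.1} :=
    measurableSet_lt (hFmeas.comp measurable_snd) measurable_fst
  have key : (∫⁻ u in Set.Ioc (0 : ℝ) α, ENNReal.ofReal (Finv u))
      = ∫⁻ t in Set.Ioi (0 : ℝ), ENNReal.ofReal (α - F t) := by
    calc (∫⁻ u in Set.Ioc (0 : ℝ) α, ENNReal.ofReal (Finv u))
        = ∫⁻ u in Set.Ioc (0 : ℝ) α, ∫⁻ t in Set.Ioi (0 : ℝ),
            {p : ℝ × ℝ | F p.2 < p.1}.indicator 1 (u, t) := by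
          refine setLIntegral_congr_fun measurableSet_Ioc ?_
          intro u hu; dsimp only
          have h1 : (fun t => ({p : ℝ × ℝ | F p.2 < p.1}).indicator
              (1 : ℝ × ℝ → ℝ≥0∞) (u, t)) = (Set.Iio (Finv u)).indicator 1 := by
            ext t
            simp only [Set.indicator_apply, Set.mem_setOf_eq, Set.mem_Iio, Pi.one_apply,
              hFinv_lt u hu.1 (lt_of_le_of_lt hu.2 hα1) t]
          rw [h1, lintegral_indicator measurableSet_Iio,
            Measure.restrict_restrict measurableSet_Iio]
          have h2 : Set.Iio (Finv u) ∩ Set.Ioi 0 = Set.Ioo 0 (Finv u) := by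
            ext t; simp [Set.mem_Ioo, and_comm]
          simp only [Pi.one_apply]
          rw [setLIntegral_one, h2, Real.volume_Ioo, sub_zero]
      _ = ∫⁻ t in Set.Ioi (0 : ℝ), ∫⁻ u in Set.Ioc (0 : ℝ) α,
            {p : ℝ × ℝ | F p.2 < p.1}.indicator 1 (u, t) := by
          exact lintegral_lintegral_swap ((measurable_one.indicator hs).aemeasurable)
      _ = ∫⁻ t in Set.Ioi (0 : ℝ), ENNReal.ofReal (α - F t) := by
          refine setLIntegral_congr_fun measurableSet_Ioi ?_
          intro t ht; dsimp only
          have h1 : (fun u => ({p : ℝ × ℝ | F p.2 < p.1}).indicator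
              (1 : ℝ × ℝ → ℝ≥0∞) (u, t)) = (Set.Ioi (F t)).indicator 1 := by
            ext u
            simp [Set.indicator_apply, Set.mem_setOf_eq, Set.mem_Ioi]
          rw [h1, lintegral_indicator measurableSet_Ioi,
            Measure.restrict_restrict measurableSet_Ioi]
          have h2 : Set.Ioi (F t) ∩ Set.Ioc 0 α = Set.Ioc (F t) α := by
            ext u
            simp only [Set.mem_inter_iff, Set.mem_Ioi, Set.mem_Ioc]
            constructor
            · rintro ⟨h3, _, h5⟩; exact ⟨h3, h5⟩
            · rintro ⟨h3, h4⟩; exact ⟨h3, lt_of_le_of_lt (hF0 t) h3, h4⟩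
          simp only [Pi.one_apply]
          rw [setLIntegral_one, h2, Real.volume_Ioc]
  have hL : (∫ u in (0 : ℝ)..α, Finv u)
      = (∫⁻ u in Set.Ioc (0 : ℝ) α, ENNReal.ofReal (Finv u)).toReal := by
    rw [intervalIntegral.integral_of_le hα0.le]
    refine integral_eq_lintegral_of_nonneg_ae ?_ ?_
    · rw [EventuallyLE, ae_restrict_iff' measurableSet_Ioc]
      filter_upwards with u hu
      exact hFinv_nonneg u hu.1 (lt_of_le_of_lt hu.2 hα1)
    · exact (aemeasurable_restrict_of_monotoneOn measurableSet_Ioc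
        hFinv_mono).aestronglyMeasurable
  have hR : (∫ t in Set.Ioi (0 : ℝ), max (α - F t) 0)
      = (∫⁻ t in Set.Ioi (0 : ℝ), ENNReal.ofReal (α - F t)).toReal := by
    have heq := integral_eq_lintegral_of_nonneg_ae
      (μ := volume.restrict (Set.Ioi (0:ℝ))) (f := fun t => max (α - F t) 0)
      (Filter.Eventually.of_forall fun t => le_max_right _ _)
      (((measurable_const.sub hFmeas).max measurable_const).aestronglyMeasurable)
    refine heq.trans ?_
    congr 1
    refine lintegral_congr fun t => ?_
    show ENNReal.ofReal (max (α - F t) 0) = ENNReal.ofReal (α - F t)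
    rcases le_total (α - F t) 0 with h | h
    · rw [max_eq_right h, ENNReal.ofReal_of_nonpos h, ENNReal.ofReal_zero]
    · rw [max_eq_left h]
  rw [hL, hR, key]
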